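/- arXiv:math/0702568 — 3 statements merged into one kernel-verified Lean document; each statement's English description precedes it below -/
import Mathlib

section
/- For every z ∈ 𝔻 and all vertices x, y of the tree T, the operator norm of c_z(x,y) on ℓ²(X) satisfies ‖c_z(x,y)‖ ≤ 4(1 − |z|)^{−1}. -/
noncomputable section

open scoped ComplexConjugate
open scoped ENNReal

/-- `ℓ²(X)`: the Hilbert space of square-summable complex functions on `X`. -/
abbrev ell2 (X : Type) : Type := lp (fun _ : X => ℂ) 2

/-- The Dirac function `δ_v` at a vertex `v`. -/
noncomputable def delta {X : Type} [DecidableEq X] (v : X) : ell2 X :=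
  lp.single 2 v (1 : ℂ)

/-- `w = √(1 − z²)`, using the principal branch of the square root, which is
holomorphic off the negative real axis and positive on the positive reals. -/
noncomputable def W (z : ℂ) : ℂ := (1 - z ^ 2) ^ ((1 : ℂ) / 2)

/-- The defining property of the edge operator `c_z(x,y)` for adjacent vertices
`x, y`: it sends `δ_x ↦ wδ_x − zδ_y`, `δ_y ↦ wδ_y + zδ_x`, and fixes `δ_v` for
every other vertex `v`. -/
def IsEdgeOp {X : Type} [DecidableEq X] (z : ℂ) (x y : X)
    (A : ell2 X →L[ℂ] ell2 X) : Prop :=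
  A (delta x) = W z • delta x - z • delta y ∧
  A (delta y) = W z • delta y + z • delta x ∧
  ∀ v : X, v ≠ x → v ≠ y → A (delta v) = delta v

/-- The product `f(v₀,v₁) * f(v₁,v₂) * ⋯ * f(v_{n−1},v_n)` along a walk
`v₀, v₁, …, v_n`. -/
def walkProd {X : Type} {T : SimpleGraph X} {E : Type} [Monoid E]
    (f : X → X → E) : {a b : X} → T.Walk a b → E
  | _, _, SimpleGraph.Walk.nil => 1
  | _, _, SimpleGraph.Walk.cons (u := u) (v := v) _ p => f u v * walkProd f p

set_option linter.unusedSectionVars false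
set_option maxHeartbeats 1000000

section Aux

variable {X : Type} [DecidableEq X]

lemma delta_apply (v u : X) : (delta v : ell2 X) u = if u = v then 1 else 0 := by
  rw [delta, lp.single_apply]
  split <;> simp_all

lemma norm_delta (v : X) : ‖(delta v : ell2 X)‖ = 1 := by
  have := lp.norm_single (p := 2) (E := fun _ : X => ℂ) (by norm_num) v (1:ℂ)
  simpa [delta] using this

lemma inner_delta_left (v : X) (f : ell2 X) : (inner ℂ (delta v) f : ℂ) = f v := by
  rw [delta, lp.inner_single_left]
  simp [RCLike.inner_apply]

lemma orthonormal_delta : Orthonormal ℂ (fun v : X => delta v) := by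
  rw [orthonormal_iff_ite]
  intro i j
  rw [inner_delta_left, delta_apply]

noncomputable def rk (x y : X) : ell2 X →L[ℂ] ell2 X :=
  (innerSL ℂ (delta x)).smulRight (delta y)

lemma rk_apply (x y : X) (f : ell2 X) : rk x y f = f x • delta y := by
  rw [rk, ContinuousLinearMap.smulRight_apply, innerSL_apply_apply, inner_delta_left]

lemma rk_delta (x y u : X) : rk x y (delta u) = if u = x then delta y else 0 := by
  rw [rk_apply, delta_apply]
  rcases eq_or_ne u x with h | h
  · simp [h]
  · simp [h, Ne.symm h]

lemma clm_ext_delta {A B : ell2 X →L[ℂ] ell2 X}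
    (h : ∀ v, A (delta v) = B (delta v)) : A = B := by
  refine ContinuousLinearMap.ext fun f => ?_
  have hf : HasSum (fun v : X => lp.single 2 v (f v)) f :=
    lp.hasSum_single (by norm_num) f
  have hs : ∀ v : X, lp.single 2 v (f v) = f v • delta v := by
    intro v
    rw [delta, ← lp.single_smul]
    norm_num
  have hA : HasSum (fun v : X => A (lp.single 2 v (f v))) (A f) := hf.mapL A
  have hB : HasSum (fun v : X => B (lp.single 2 v (f v))) (B f) := hf.mapL B
  refine hA.unique ?_
  convert hB using 2 with v
  rw [hs, map_smul, map_smul, h]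

lemma sum_norm_apply_sq_le (f : ell2 X) (s : Finset X) :
    ∑ x ∈ s, ‖f x‖ ^ 2 ≤ ‖f‖ ^ 2 := by
  have h := lp.sum_rpow_le_norm_rpow (p := 2) (E := fun _ : X => ℂ) (by norm_num) f s
  have h2 : ((2 : ℝ≥0∞)).toReal = (2 : ℝ) := by norm_num
  rw [h2] at h
  calc ∑ x ∈ s, ‖f x‖ ^ 2 = ∑ x ∈ s, ‖f x‖ ^ (2 : ℝ) := by
        refine Finset.sum_congr rfl fun x _ => ?_
        rw [← Real.rpow_natCast (‖f x‖) 2]; norm_num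
    _ ≤ ‖f‖ ^ (2 : ℝ) := h
    _ = ‖f‖ ^ 2 := by rw [← Real.rpow_natCast ‖f‖ 2]; norm_num


lemma norm_rankSum_le (s : Finset ℕ) (a b : ℕ → X) (cf : ℕ → ℂ) (C : ℝ) (hC : 0 ≤ C)
    (ha : Set.InjOn a s) (hb : Set.InjOn b s) (hc : ∀ j ∈ s, ‖cf j‖ ≤ C) :
    ‖∑ j ∈ s, cf j • rk (a j) (b j)‖ ≤ C := by
  refine ContinuousLinearMap.opNorm_le_bound _ hC fun f => ?_
  have happ : (∑ j ∈ s, cf j • rk (a j) (b j)) f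
      = ∑ j ∈ s.attach, (cf j.1 * f (a j.1)) • delta (b j.1) := by
    rw [← Finset.sum_attach s (fun j => cf j • rk (a j) (b j))]
    rw [ContinuousLinearMap.sum_apply]
    refine Finset.sum_congr rfl fun j _ => ?_
    rw [ContinuousLinearMap.smul_apply, rk_apply, smul_smul]
  rw [happ]
  have hON : Orthonormal ℂ (fun j : {x // x ∈ s} => delta (b j.1)) := by
    refine orthonormal_delta.comp _ ?_
    intro i j hij
    exact Subtype.ext (hb i.2 j.2 hij)
  have hsq : ‖∑ j ∈ s.attach, (cf j.1 * f (a j.1)) • delta (b j.1)‖ ^ 2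
      = ∑ j ∈ s.attach, ‖cf j.1 * f (a j.1)‖ ^ 2 := by
    have h1 := hON.inner_sum (fun j => cf j.1 * f (a j.1)) (fun j => cf j.1 * f (a j.1)) s.attach
    have h3 := inner_self_eq_norm_sq (𝕜 := ℂ)
      (∑ j ∈ s.attach, (cf j.1 * f (a j.1)) • delta (b j.1))
    rw [← h3, h1, map_sum]
    refine Finset.sum_congr rfl fun j _ => ?_
    rw [RCLike.conj_mul]
    norm_cast
  have hle : ∑ j ∈ s.attach, ‖cf j.1 * f (a j.1)‖ ^ 2 ≤ (C * ‖f‖) ^ 2 := by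
    calc ∑ j ∈ s.attach, ‖cf j.1 * f (a j.1)‖ ^ 2
        ≤ ∑ j ∈ s.attach, C ^ 2 * ‖f (a j.1)‖ ^ 2 := by
          refine Finset.sum_le_sum fun j _ => ?_
          rw [norm_mul, mul_pow]
          have := hc j.1 j.2
          gcongr
      _ = C ^ 2 * ∑ j ∈ s.attach, ‖f (a j.1)‖ ^ 2 := by rw [Finset.mul_sum]
      _ ≤ C ^ 2 * ‖f‖ ^ 2 := by
          gcongr
          have himg : ∑ j ∈ s.attach, ‖f (a j.1)‖ ^ 2 = ∑ x ∈ s.image a, ‖f x‖ ^ 2 := by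
            rw [Finset.sum_image (fun i hi j hj hij => ha hi hj hij)]
            rw [← Finset.sum_attach s (fun j => ‖f (a j)‖ ^ 2)]
          rw [himg]
          exact sum_norm_apply_sq_le f _
      _ = (C * ‖f‖) ^ 2 := by ring
  have := hsq ▸ hle
  exact le_of_pow_le_pow_left₀ two_ne_zero (by positivity) this

lemma normW_sq_le (z : ℂ) (hz : ‖z‖ < 1) : ‖W z‖ ^ 2 ≤ 2 := by
  have hz0 : 0 ≤ ‖z‖ := norm_nonneg z
  have hne : (1 : ℂ) - z ^ 2 ≠ 0 := by
    intro h
    have : ‖z ^ 2‖ < 1 := by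
      rw [norm_pow]
      nlinarith
    rw [sub_eq_zero] at h
    rw [← h] at this
    simp at this
  have habs : ‖W z‖ = ‖1 - z ^ 2‖ ^ ((1:ℝ)/2) := by
    rw [W, Complex.norm_cpow_of_ne_zero hne]
    norm_num
  have h1 : ‖W z‖ ^ 2 = ‖1 - z ^ 2‖ := by
    rw [habs, ← Real.rpow_natCast (‖1 - z^2‖ ^ ((1:ℝ)/2)) 2,
      ← Real.rpow_mul (norm_nonneg _)]
    norm_num
  rw [h1]
  calc ‖1 - z ^ 2‖ ≤ ‖(1:ℂ)‖ + ‖z ^ 2‖ := by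
        exact (norm_sub_le _ _)
    _ ≤ 2 := by
        rw [norm_one, norm_pow]
        have : ‖z‖ < 1 := hz
        nlinarith [norm_nonneg z]

lemma normW_le (z : ℂ) (hz : ‖z‖ < 1) : ‖W z‖ ≤ 2 := by
  nlinarith [normW_sq_le z hz, norm_nonneg (W z)]

def pathProd {E : Type} [Monoid E] (G : X → X → E) : (ℕ → X) → ℕ → E
  | _, 0 => 1
  | v, (n+1) => G (v 0) (v 1) * pathProd G (fun i => v (i+1)) n

lemma walkProd_eq_pathProd {T : SimpleGraph X} {E : Type} [Monoid E] (f : X → X → E) :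
    ∀ {a b : X} (p : T.Walk a b), walkProd f p = pathProd f p.getVert p.length := by
  intro a b p
  induction p with
  | nil => rfl
  | cons h q ih =>
    rename_i u v w
    show f u v * walkProd f q = _
    rw [ih]
    have h0 : (SimpleGraph.Walk.cons h q).getVert 0 = u := SimpleGraph.Walk.getVert_zero _
    have h1 : (SimpleGraph.Walk.cons h q).getVert 1 = v := by
      rw [SimpleGraph.Walk.getVert_cons_succ, SimpleGraph.Walk.getVert_zero]
    have hlen : (SimpleGraph.Walk.cons h q).length = q.length + 1 :=
      SimpleGraph.Walk.length_cons _ _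
    rw [hlen]
    show _ = pathProd f ((SimpleGraph.Walk.cons h q).getVert) (q.length + 1)
    have : pathProd f ((SimpleGraph.Walk.cons h q).getVert) (q.length + 1)
        = f ((SimpleGraph.Walk.cons h q).getVert 0) ((SimpleGraph.Walk.cons h q).getVert 1)
          * pathProd f (fun i => (SimpleGraph.Walk.cons h q).getVert (i+1)) q.length := rfl
    rw [this, h0, h1]
    congr 1

lemma getVert_injOn_of_isPath {T : SimpleGraph X} :
    ∀ {a b : X} (p : T.Walk a b), p.IsPath →
      ∀ i j, i ≤ p.length → j ≤ p.length → p.getVert i = p.getVert j → i = j := by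
  intro a b p
  induction p with
  | nil => intro _ i j hi hj _; simp at hi hj; omega
  | cons h q ih =>
    rename_i u v w
    intro hp i j hi hj hij
    rw [SimpleGraph.Walk.cons_isPath_iff] at hp
    rw [SimpleGraph.Walk.length_cons] at hi hj
    have hmem : ∀ m, m ≤ q.length → q.getVert m ∈ q.support := by
      intro m hm
      rw [SimpleGraph.Walk.mem_support_iff_exists_getVert]
      exact ⟨m, rfl, hm⟩
    match i, j with
    | 0, 0 => rfl
    | 0, (j+1) =>
      exfalso
      rw [SimpleGraph.Walk.getVert_zero, SimpleGraph.Walk.getVert_cons_succ] at hij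
      exact hp.2 (hij ▸ hmem j (by omega))
    | (i+1), 0 =>
      exfalso
      rw [SimpleGraph.Walk.getVert_zero, SimpleGraph.Walk.getVert_cons_succ] at hij
      exact hp.2 (hij ▸ hmem i (by omega))
    | (i+1), (j+1) =>
      rw [SimpleGraph.Walk.getVert_cons_succ, SimpleGraph.Walk.getVert_cons_succ] at hij
      have := ih hp.1 i j (by omega) (by omega) hij
      omega

lemma pathProd_formula (z : ℂ) (G : X → X → (ell2 X →L[ℂ] ell2 X)) :
    ∀ (n : ℕ) (v : ℕ → X),
    (∀ i j, i ≤ n → j ≤ n → v i = v j → i = j) →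
    (∀ i, i < n → IsEdgeOp z (v i) (v (i+1)) (G (v i) (v (i+1)))) →
    ((∀ u : X, (∀ i, i ≤ n → u ≠ v i) → pathProd G v n (delta u) = delta u) ∧
    (∀ j, j < n → pathProd G v n (delta (v j)) =
      (W z * z ^ j) • delta (v 0)
      + (∑ k ∈ Finset.range j, (W z * W z * z ^ k) • delta (v (j - k)))
      - z • delta (v (j + 1))) ∧
    (pathProd G v n (delta (v n)) =
      (z ^ n) • delta (v 0) + ∑ k ∈ Finset.range n, (W z * z ^ k) • delta (v (n - k)))) := by
  intro n
  induction n with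
  | zero =>
    intro v _ _
    refine ⟨fun u _ => by simp [pathProd], fun j hj => absurd hj (by omega), ?_⟩
    simp [pathProd]
  | succ n ih =>
    intro v hinj hedge
    have hinj' : ∀ i j, i ≤ n → j ≤ n → v (i+1) = v (j+1) → i = j := by
      intro i j hi hj h
      have := hinj (i+1) (j+1) (by omega) (by omega) h
      omega
    have hedge' : ∀ i, i < n →
        IsEdgeOp z (v (i+1)) (v (i+1+1)) (G (v (i+1)) (v (i+1+1))) := by
      intro i hi
      exact hedge (i+1) (by omega)
    obtain ⟨IH1, IH2, IH3⟩ := ih (fun i => v (i+1)) hinj' hedge'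
    obtain ⟨hA1, hA2, hA3⟩ := hedge 0 (by omega)
    have hPP : pathProd G v (n+1) = G (v 0) (v 1) * pathProd G (fun i => v (i+1)) n := rfl
    refine ⟨?_, ?_, ?_⟩
    · -- clause 1
      intro u hu
      rw [hPP, ContinuousLinearMap.mul_apply,
        IH1 u (fun i hi => hu (i+1) (by omega)),
        hA3 u (hu 0 (by omega)) (hu 1 (by omega))]
    · -- clause 2
      intro j hj
      match j with
      | 0 =>
        rw [hPP, ContinuousLinearMap.mul_apply]
        have h0 : pathProd G (fun i => v (i+1)) n (delta (v 0)) = delta (v 0) := by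
          refine IH1 (v 0) (fun i hi h => ?_)
          have := hinj 0 (i+1) (by omega) (by omega) h
          omega
        rw [h0, hA1]
        simp
      | (m+1) =>
        have hm : m < n := by omega
        rw [hPP, ContinuousLinearMap.mul_apply]
        have hδ : delta (v (m+1)) = delta ((fun i => v (i+1)) m) := rfl
        rw [hδ, IH2 m hm]
        simp only [map_sub, map_add, map_smul, map_sum]
        have e1 : (fun i => v (i+1)) 0 = v 1 := rfl
        rw [show G (v 0) (v 1) (delta ((fun i => v (i+1)) 0)) =
            W z • delta (v 1) + z • delta (v 0) from hA2]
        have hsum : ∑ k ∈ Finset.range m,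
              (W z * W z * z ^ k) • (G (v 0) (v 1)) (delta ((fun i => v (i+1)) (m - k)))
            = ∑ k ∈ Finset.range m, (W z * W z * z ^ k) • delta (v (m - k + 1)) := by
          refine Finset.sum_congr rfl fun k hk => ?_
          rw [Finset.mem_range] at hk
          have h2 : m - k + 1 ≠ 0 := by omega
          have h3 : m - k + 1 ≠ 1 := by omega
          have hne0 : v (m - k + 1) ≠ v 0 := fun h =>
            h2 (hinj (m-k+1) 0 (by omega) (by omega) h)
          have hne1 : v (m - k + 1) ≠ v 1 := fun h =>
            h3 (hinj (m-k+1) 1 (by omega) (by omega) h)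
          rw [show delta ((fun i => v (i+1)) (m - k)) = delta (v (m-k+1)) from rfl,
            hA3 _ hne0 hne1]
        rw [hsum]
        have hlast : (G (v 0) (v 1)) (delta ((fun i => v (i+1)) (m+1))) = delta (v (m+2)) := by
          have h2 : (m + 2 : ℕ) ≠ 0 := by omega
          have h3 : (m + 2 : ℕ) ≠ 1 := by omega
          have hle : m + 2 ≤ n + 1 := by omega
          have hne0 : v (m+2) ≠ v 0 := fun h => h2 (hinj (m+2) 0 hle (by omega) h)
          have hne1 : v (m+2) ≠ v 1 := fun h => h3 (hinj (m+2) 1 hle (by omega) h)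
          exact hA3 _ hne0 hne1
        rw [hlast]
        -- now pure algebra
        rw [Finset.sum_range_succ]
        have hidx : ∀ k ∈ Finset.range m,
            (W z * W z * z ^ k) • delta (v (m + 1 - k)) =
            (W z * W z * z ^ k) • delta (v (m - k + 1)) := by
          intro k hk
          rw [Finset.mem_range] at hk
          have h : m + 1 - k = m - k + 1 := by omega
          rw [h]
        rw [Finset.sum_congr rfl hidx]
        have : m + 1 - m = 1 := by omega
        rw [this]
        have hz : z ^ (m+1) = z ^ m * z := by ring
        module
    · -- clause 3
      rw [hPP, ContinuousLinearMap.mul_apply]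
      have hδ : delta (v (n+1)) = delta ((fun i => v (i+1)) n) := rfl
      rw [hδ, IH3]
      simp only [map_add, map_smul, map_sum]
      rw [show G (v 0) (v 1) (delta ((fun i => v (i+1)) 0)) =
          W z • delta (v 1) + z • delta (v 0) from hA2]
      have hsum : ∑ k ∈ Finset.range n,
            (W z * z ^ k) • (G (v 0) (v 1)) (delta ((fun i => v (i+1)) (n - k)))
          = ∑ k ∈ Finset.range n, (W z * z ^ k) • delta (v (n - k + 1)) := by
        refine Finset.sum_congr rfl fun k hk => ?_
        rw [Finset.mem_range] at hk
        have h2 : n - k + 1 ≠ 0 := by omega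
        have h3 : n - k + 1 ≠ 1 := by omega
        have hne0 : v (n - k + 1) ≠ v 0 := fun h =>
          h2 (hinj (n-k+1) 0 (by omega) (by omega) h)
        have hne1 : v (n - k + 1) ≠ v 1 := fun h =>
          h3 (hinj (n-k+1) 1 (by omega) (by omega) h)
        rw [show delta ((fun i => v (i+1)) (n - k)) = delta (v (n-k+1)) from rfl,
          hA3 _ hne0 hne1]
      rw [hsum]
      rw [Finset.sum_range_succ]
      have hidx : ∀ k ∈ Finset.range n,
          (W z * z ^ k) • delta (v (n + 1 - k)) =
          (W z * z ^ k) • delta (v (n - k + 1)) := by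
        intro k hk
        rw [Finset.mem_range] at hk
        have h : n + 1 - k = n - k + 1 := by omega
        rw [h]
      rw [Finset.sum_congr rfl hidx]
      have : n + 1 - n = 1 := by omega
      rw [this]
      have hz : z ^ (n+1) = z ^ n * z := by ring
      module

lemma eval_sum_rk_eq (s : Finset ℕ) (cf : ℕ → ℂ) (a b : ℕ → X) (u : X) (t : ℕ)
    (ht : t ∈ s) (hu : u = a t) (huniq : ∀ j ∈ s, u = a j → j = t) :
    (∑ j ∈ s, cf j • rk (a j) (b j)) (delta u) = cf t • delta (b t) := by
  rw [ContinuousLinearMap.sum_apply]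
  have hz : ∀ j ∈ s, j ≠ t → (cf j • rk (a j) (b j)) (delta u) = 0 := by
    intro j hj hne
    rw [ContinuousLinearMap.smul_apply, rk_delta, if_neg (fun h => hne (huniq j hj h)),
      smul_zero]
  rw [Finset.sum_eq_single_of_mem t ht hz, ContinuousLinearMap.smul_apply, rk_delta,
    if_pos hu]

lemma eval_sum_rk_zero (s : Finset ℕ) (cf : ℕ → ℂ) (a b : ℕ → X) (u : X)
    (hu : ∀ j ∈ s, u ≠ a j) :
    (∑ j ∈ s, cf j • rk (a j) (b j)) (delta u) = 0 := by
  rw [ContinuousLinearMap.sum_apply]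
  refine Finset.sum_eq_zero fun j hj => ?_
  rw [ContinuousLinearMap.smul_apply, rk_delta, if_neg (hu j hj), smul_zero]

noncomputable def dcoef (z : ℂ) (n k t : ℕ) : ℂ :=
  if t = n then (if k = n then 1 else W z) else (if k = t then W z else W z * W z)

lemma dcoef_norm_le (z : ℂ) (hz : ‖z‖ < 1) (n k t : ℕ) : ‖dcoef z n k t‖ ≤ 2 := by
  have h1 := normW_le z hz
  have h2 : ‖W z * W z‖ ≤ 2 := by
    rw [norm_mul, ← sq]
    exact normW_sq_le z hz
  unfold dcoef
  split_ifs <;> simp_all <;> norm_num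

lemma pathProd_norm_le (z : ℂ) (hz : ‖z‖ < 1) (G : X → X → (ell2 X →L[ℂ] ell2 X))
    (n : ℕ) (v : ℕ → X)
    (hinj : ∀ i j, i ≤ n → j ≤ n → v i = v j → i = j)
    (hedge : ∀ i, i < n → IsEdgeOp z (v i) (v (i+1)) (G (v i) (v (i+1)))) :
    ‖pathProd G v n‖ ≤ 4 * (1 - ‖z‖)⁻¹ := by
  have hr0 : (0:ℝ) ≤ ‖z‖ := norm_nonneg z
  have h1r : (0:ℝ) < 1 - ‖z‖ := by linarith
  have hinv1 : (1:ℝ) ≤ (1 - ‖z‖)⁻¹ := by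
    rw [le_inv_comm₀] <;> [skip; norm_num; exact h1r]
    linarith
  rcases Nat.eq_zero_or_pos n with hn0 | hn1
  · subst hn0
    have : pathProd G v 0 = (1 : ell2 X →L[ℂ] ell2 X) := rfl
    rw [this]
    calc ‖(1 : ell2 X →L[ℂ] ell2 X)‖ ≤ 1 := ContinuousLinearMap.norm_id_le
      _ ≤ 4 * (1 - ‖z‖)⁻¹ := by nlinarith
  -- n ≥ 1
  obtain ⟨C1, C2, C3⟩ := pathProd_formula z G n v hinj hedge
  set Aop : ell2 X →L[ℂ] ell2 X :=
    ∑ j ∈ Finset.range n, (1:ℂ) • rk (v j) (v (j+1)) with hAop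
  set F0 : ell2 X →L[ℂ] ell2 X :=
    ∑ t ∈ Finset.range (n+1), (dcoef z n 0 t - 1) • rk (v t) (v t) with hF0
  set FK : ℕ → (ell2 X →L[ℂ] ell2 X) :=
    fun k => ∑ t ∈ Finset.Icc k n, dcoef z n k t • rk (v t) (v (t - k)) with hFK
  have hdecomp : pathProd G v n =
      1 + (-z) • Aop + F0 + ∑ k ∈ Finset.Icc 1 n, z ^ k • FK k := by
    refine clm_ext_delta fun u => ?_
    have happ : (1 + (-z) • Aop + F0 + ∑ k ∈ Finset.Icc 1 n, z ^ k • FK k) (delta u)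
        = delta u + (-z) • Aop (delta u) + F0 (delta u)
          + ∑ k ∈ Finset.Icc 1 n, z ^ k • FK k (delta u) := by
      simp [ContinuousLinearMap.add_apply, ContinuousLinearMap.smul_apply,
        ContinuousLinearMap.sum_apply, ContinuousLinearMap.one_apply]
    rw [happ]
    by_cases hex : ∃ t, t ≤ n ∧ u = v t
    · obtain ⟨t, ht, rfl⟩ := hex
      -- evaluate the three pieces
      have hEA : Aop (delta (v t)) = if t < n then delta (v (t+1)) else 0 := by
        rw [hAop]
        by_cases htn : t < n
        · rw [if_pos htn]
          have := eval_sum_rk_eq (Finset.range n) (fun _ => (1:ℂ)) v (fun j => v (j+1))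
            (v t) t (Finset.mem_range.mpr htn) rfl
            (fun j hj h => (hinj t j ht (by have := Finset.mem_range.mp hj; omega) h).symm)
          rw [this, one_smul]
        · rw [if_neg htn]
          refine eval_sum_rk_zero _ _ _ _ _ (fun j hj h => ?_)
          rw [Finset.mem_range] at hj
          have := hinj t j ht (by omega) h
          omega
      have hE0 : F0 (delta (v t)) = (dcoef z n 0 t - 1) • delta (v t) := by
        rw [hF0]
        exact eval_sum_rk_eq (Finset.range (n+1)) (fun j => dcoef z n 0 j - 1) v v
          (v t) t (Finset.mem_range.mpr (by omega)) rfl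
          (fun j hj h => (hinj t j ht (by have := Finset.mem_range.mp hj; omega) h).symm)
      have hEK : ∀ k ∈ Finset.Icc 1 n, FK k (delta (v t))
          = if k ≤ t then dcoef z n k t • delta (v (t - k)) else 0 := by
        intro k hk
        rw [Finset.mem_Icc] at hk
        rw [hFK]
        by_cases hkt : k ≤ t
        · rw [if_pos hkt]
          exact eval_sum_rk_eq (Finset.Icc k n) (fun t' => dcoef z n k t') v
            (fun t' => v (t' - k)) (v t) t (Finset.mem_Icc.mpr ⟨hkt, ht⟩) rfl
            (fun j hj h => (hinj t j ht (Finset.mem_Icc.mp hj).2 h).symm)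
        · rw [if_neg hkt]
          refine eval_sum_rk_zero _ _ _ _ _ (fun j hj h => ?_)
          rw [Finset.mem_Icc] at hj
          have := hinj t j ht hj.2 h
          omega
      rw [hEA, hE0, Finset.sum_congr rfl (fun k hk => by rw [hEK k hk] :
        ∀ k ∈ Finset.Icc 1 n, z ^ k • FK k (delta (v t))
          = z ^ k • (if k ≤ t then dcoef z n k t • delta (v (t - k)) else 0))]
      have hsum : ∑ k ∈ Finset.Icc 1 n,
            z ^ k • (if k ≤ t then dcoef z n k t • delta (v (t - k)) else 0)
          = ∑ k ∈ Finset.Icc 1 t, (z ^ k * dcoef z n k t) • delta (v (t - k)) := by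
        have h1 : ∀ k ∈ Finset.Icc 1 n,
            z ^ k • (if k ≤ t then dcoef z n k t • delta (v (t - k)) else 0)
            = if k ≤ t then (z ^ k * dcoef z n k t) • delta (v (t - k)) else 0 := by
          intro k _
          split_ifs <;> simp [smul_smul]
        rw [Finset.sum_congr rfl h1, ← Finset.sum_filter]
        congr 1
        ext k
        simp only [Finset.mem_filter, Finset.mem_Icc]
        omega
      rw [hsum]
      -- now compare with the formula, case t = n or t < n
      by_cases htn : t = n
      · subst htn
        rw [C3, if_neg (lt_irrefl t)]
        have hsplit : (z ^ t) • delta (v 0)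
              + ∑ k ∈ Finset.range t, (W z * z ^ k) • delta (v (t - k))
            = ∑ k ∈ Finset.range (t+1), (z ^ k * dcoef z t k t) • delta (v (t - k)) := by
          rw [Finset.sum_range_succ]
          have hterms : ∀ k ∈ Finset.range t,
              (z ^ k * dcoef z t k t) • delta (v (t - k))
              = (W z * z ^ k) • delta (v (t - k)) := by
            intro k hk
            rw [Finset.mem_range] at hk
            have : dcoef z t k t = W z := by
              unfold dcoef
              rw [if_pos rfl, if_neg (by omega)]
            rw [this]
            ring_nf
          rw [Finset.sum_congr rfl hterms]
          have : dcoef z t t t = 1 := by unfold dcoef; simp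
          rw [this]
          rw [Nat.sub_self]
          ring_nf
          abel
        rw [hsplit]
        have hset : Finset.range (t+1) = insert 0 (Finset.Icc 1 t) := by
          ext k
          simp only [Finset.mem_range, Finset.mem_insert, Finset.mem_Icc]
          omega
        rw [hset, Finset.sum_insert (by simp)]
        simp only [Nat.sub_zero, pow_zero]
        module
      · have htlt : t < n := by omega
        rw [C2 t htlt, if_pos htlt]
        have hsplit : (W z * z ^ t) • delta (v 0)
              + ∑ k ∈ Finset.range t, (W z * W z * z ^ k) • delta (v (t - k))
            = ∑ k ∈ Finset.range (t+1), (z ^ k * dcoef z n k t) • delta (v (t - k)) := by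
          rw [Finset.sum_range_succ]
          have hterms : ∀ k ∈ Finset.range t,
              (z ^ k * dcoef z n k t) • delta (v (t - k))
              = (W z * W z * z ^ k) • delta (v (t - k)) := by
            intro k hk
            rw [Finset.mem_range] at hk
            have : dcoef z n k t = W z * W z := by
              unfold dcoef
              rw [if_neg htn, if_neg (by omega)]
            rw [this]
            ring_nf
          rw [Finset.sum_congr rfl hterms]
          have : dcoef z n t t = W z := by
            unfold dcoef
            rw [if_neg htn, if_pos rfl]
          rw [this]
          rw [Nat.sub_self]
          ring_nf
          abel
        rw [hsplit]
        have hset : Finset.range (t+1) = insert 0 (Finset.Icc 1 t) := by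
          ext k
          simp only [Finset.mem_range, Finset.mem_insert, Finset.mem_Icc]
          omega
        rw [hset, Finset.sum_insert (by simp)]
        simp only [Nat.sub_zero, pow_zero]
        module
    · push_neg at hex
      rw [C1 u (fun i hi => hex i hi)]
      have hA0 : Aop (delta u) = 0 := by
        rw [hAop]
        exact eval_sum_rk_zero _ _ _ _ _
          (fun j hj => hex j (by have := Finset.mem_range.mp hj; omega))
      have hF00 : F0 (delta u) = 0 := by
        rw [hF0]
        exact eval_sum_rk_zero _ _ _ _ _
          (fun j hj => hex j (by have := Finset.mem_range.mp hj; omega))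
      have hFK0 : ∀ k ∈ Finset.Icc 1 n, z ^ k • FK k (delta u) = z ^ k • 0 := by
        intro k hk
        congr 1
        rw [hFK]
        exact eval_sum_rk_zero _ _ _ _ _
          (fun j hj => hex j (Finset.mem_Icc.mp hj).2)
      rw [hA0, hF00, Finset.sum_congr rfl hFK0]
      simp
  -- norm bounds
  have hnA : ‖Aop‖ ≤ 1 := by
    rw [hAop]
    refine norm_rankSum_le (Finset.range n) v (fun j => v (j+1)) (fun _ => (1:ℂ)) 1
      zero_le_one ?_ ?_ (fun j _ => by norm_num)
    · intro i hi j hj h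
      simp only [Finset.coe_range, Set.mem_Iio] at hi hj
      exact hinj i j (by omega) (by omega) h
    · intro i hi j hj h
      simp only [Finset.coe_range, Set.mem_Iio] at hi hj
      have := hinj (i+1) (j+1) (by omega) (by omega) h
      omega
  have hnF0 : ‖F0‖ ≤ 3 := by
    rw [hF0]
    refine norm_rankSum_le (Finset.range (n+1)) v v (fun j => dcoef z n 0 j - 1) 3
      (by norm_num) ?_ ?_ ?_
    · intro i hi j hj h
      simp only [Finset.coe_range, Set.mem_Iio] at hi hj
      exact hinj i j (by omega) (by omega) h
    · intro i hi j hj h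
      simp only [Finset.coe_range, Set.mem_Iio] at hi hj
      exact hinj i j (by omega) (by omega) h
    · intro j _
      calc ‖dcoef z n 0 j - 1‖ ≤ ‖dcoef z n 0 j‖ + ‖(1:ℂ)‖ := norm_sub_le _ _
        _ ≤ 2 + 1 := by
            have h := dcoef_norm_le z hz n 0 j
            have h1 : ‖(1:ℂ)‖ = 1 := norm_one
            linarith
        _ = 3 := by norm_num
  have hnFK : ∀ k ∈ Finset.Icc 1 n, ‖FK k‖ ≤ 2 := by
    intro k hk
    rw [Finset.mem_Icc] at hk
    rw [hFK]
    refine norm_rankSum_le (Finset.Icc k n) v (fun t => v (t - k)) (fun t => dcoef z n k t) 2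
      (by norm_num) ?_ ?_ (fun j _ => dcoef_norm_le z hz n k j)
    · intro i hi j hj h
      simp only [Finset.coe_Icc, Set.mem_Icc] at hi hj
      exact hinj i j hi.2 hj.2 h
    · intro i hi j hj h
      simp only [Finset.coe_Icc, Set.mem_Icc] at hi hj
      have := hinj (i - k) (j - k) (by omega) (by omega) h
      omega
  have hgeom : ∑ k ∈ Finset.Icc 1 n, ‖z‖ ^ k ≤ ‖z‖ * (1 - ‖z‖)⁻¹ := by
    have h1 : ∑ k ∈ Finset.Icc 1 n, ‖z‖ ^ k = ∑ i ∈ Finset.range n, ‖z‖ ^ (1 + i) := by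
      rw [← Finset.Ico_add_one_right_eq_Icc, Finset.sum_Ico_eq_sum_range]
      simp
    rw [h1]
    have h2 : ∀ i ∈ Finset.range n, ‖z‖ ^ (1 + i) = ‖z‖ * ‖z‖ ^ i := by
      intro i _
      rw [pow_add, pow_one]
    rw [Finset.sum_congr rfl h2, ← Finset.mul_sum]
    have h3 : ∑ i ∈ Finset.range n, ‖z‖ ^ i ≤ (1 - ‖z‖)⁻¹ := by
      have h4 := Summable.sum_le_tsum (Finset.range n) (fun i _ => pow_nonneg hr0 i)
        (summable_geometric_of_lt_one hr0 hz)
      rw [tsum_geometric_of_lt_one hr0 hz] at h4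
      exact h4
    exact mul_le_mul_of_nonneg_left h3 hr0
  rw [hdecomp]
  have hbig : ‖∑ k ∈ Finset.Icc 1 n, z ^ k • FK k‖ ≤ 2 * (‖z‖ * (1 - ‖z‖)⁻¹) := by
    calc ‖∑ k ∈ Finset.Icc 1 n, z ^ k • FK k‖
        ≤ ∑ k ∈ Finset.Icc 1 n, ‖z ^ k • FK k‖ := norm_sum_le _ _
      _ ≤ ∑ k ∈ Finset.Icc 1 n, ‖z‖ ^ k * 2 := by
          refine Finset.sum_le_sum fun k hk => ?_
          exact_mod_cast (norm_smul (z ^ k) (FK k)).le.trans (by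
            rw [norm_pow]
            exact mul_le_mul_of_nonneg_left (hnFK k hk) (by positivity))
      _ = 2 * ∑ k ∈ Finset.Icc 1 n, ‖z‖ ^ k := by
          rw [← Finset.sum_mul, mul_comm]
      _ ≤ 2 * (‖z‖ * (1 - ‖z‖)⁻¹) := by linarith [hgeom]
  calc ‖1 + (-z) • Aop + F0 + ∑ k ∈ Finset.Icc 1 n, z ^ k • FK k‖
      ≤ ‖1 + (-z) • Aop + F0‖ + ‖∑ k ∈ Finset.Icc 1 n, z ^ k • FK k‖ := norm_add_le _ _
    _ ≤ (‖1 + (-z) • Aop‖ + ‖F0‖) + ‖∑ k ∈ Finset.Icc 1 n, z ^ k • FK k‖ := by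
        have := norm_add_le (1 + (-z) • Aop) F0
        linarith
    _ ≤ ((‖(1 : ell2 X →L[ℂ] ell2 X)‖ + ‖(-z) • Aop‖) + ‖F0‖)
        + ‖∑ k ∈ Finset.Icc 1 n, z ^ k • FK k‖ := by
        have := norm_add_le (1 : ell2 X →L[ℂ] ell2 X) ((-z) • Aop)
        linarith
    _ ≤ ((1 + ‖z‖ * 1) + 3) + 2 * (‖z‖ * (1 - ‖z‖)⁻¹) := by
        have h5 : ‖(-z) • Aop‖ ≤ ‖z‖ * 1 := by
          exact_mod_cast (norm_smul (-z) Aop).le.trans (by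
            rw [norm_neg]
            exact mul_le_mul_of_nonneg_left hnA hr0)
        have h6 : ‖(1 : ell2 X →L[ℂ] ell2 X)‖ ≤ 1 := ContinuousLinearMap.norm_id_le
        linarith [hbig, hnF0]
    _ ≤ 4 * (1 - ‖z‖)⁻¹ := by
        have hs : (1 - ‖z‖) * (1 - ‖z‖)⁻¹ = 1 := mul_inv_cancel₀ (ne_of_gt h1r)
        nlinarith [mul_nonneg hr0 (le_trans zero_le_one hinv1), hinv1]

end Aux

/-- For every `z ∈ 𝔻` and all vertices `x, y` of the tree `T`, the
operator norm of `c_z(x,y)` on `ℓ²(X)` satisfies `‖c_z(x,y)‖ ≤ 4(1 − |z|)⁻¹`. -/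
theorem cocycle_norm_bound {X : Type} [DecidableEq X] (T : SimpleGraph X)
    (hconn : T.Connected) (hacyc : T.IsAcyclic)
    (c : ℂ → X → X → (ell2 X →L[ℂ] ell2 X))
    (hedge : ∀ z ∈ Metric.ball (0 : ℂ) 1, ∀ u v : X, T.Adj u v →
      IsEdgeOp z u v (c z u v))
    (hgeo : ∀ z ∈ Metric.ball (0 : ℂ) 1, ∀ u v : X, ∀ p : T.Walk u v,
      p.length = T.dist u v → c z u v = walkProd (c z) p) :
    ∀ z ∈ Metric.ball (0 : ℂ) 1, ∀ x y : X,
      ‖c z x y‖ ≤ 4 * (1 - ‖z‖)⁻¹ := by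
  intro z hz x y
  obtain ⟨p, hp⟩ := hconn.exists_walk_length_eq_dist x y
  have hpath : p.IsPath := p.isPath_of_length_eq_dist hp
  have hz1 : ‖z‖ < 1 := by simpa [Metric.mem_ball, dist_zero_right] using hz
  rw [hgeo z hz x y p hp, walkProd_eq_pathProd]
  refine pathProd_norm_le z hz1 (c z) p.length p.getVert
    (getVert_injOn_of_isPath p hpath) ?_
  intro i hi
  exact hedge z hz _ _ (p.adj_getVert_succ hi)
end
end

section
/- For every z ∈ 𝔻, the map π_z from G to the invertible bounded operators on ℓ²(X) defined by π_z(g) = c_z(x, g·x)π(g) is a group homomorphism: π_z(e) = I and π_z(gh) = π_z(g)π_z(h) for all g, h ∈ G. -/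
set_option synthInstance.maxHeartbeats 1000000
set_option maxHeartbeats 1000000

noncomputable section

open scoped ComplexConjugate

/-- Two continuous linear operators on `ℓ²(X)` agreeing on all Dirac functions
are equal. -/
lemma delta_ext {X : Type} [DecidableEq X] {A B : ell2 X →L[ℂ] ell2 X}
    (h : ∀ v, A (delta v) = B (delta v)) : A = B := by
  let b : HilbertBasis X ℂ (ell2 X) := default
  have hb : ∀ v : X, (b v : ell2 X) = delta v := by
    intro v
    rw [← b.repr_symm_single]
    rfl
  refine ContinuousLinearMap.ext_on (s := Set.range fun v : X => delta v) ?_ ?_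
  · have h2 := b.dense_span
    rw [Submodule.dense_iff_topologicalClosure_eq_top]
    have : (Set.range fun v : X => delta v) = Set.range (b : X → ell2 X) := by
      ext w; constructor
      · rintro ⟨v, rfl⟩; exact ⟨v, hb v⟩
      · rintro ⟨v, rfl⟩; exact ⟨v, (hb v).symm⟩
    rw [this]
    exact h2
  · rintro _ ⟨v, rfl⟩
    exact h v

lemma walkProd_append {X : Type} {T : SimpleGraph X} {E : Type} [Monoid E]
    (f : X → X → E) {a b c : X} (p : T.Walk a b) (q : T.Walk b c) :
    walkProd f (p.append q) = walkProd f p * walkProd f q := by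
  induction p with
  | nil => simp [walkProd]
  | cons h p ih => simp [walkProd, ih, mul_assoc]

/-- In a connected acyclic graph, every path is a geodesic. -/
lemma path_length_eq_dist {X : Type} {T : SimpleGraph X}
    (hconn : T.Connected) (hacyc : T.IsAcyclic) {u v : X}
    (p : T.Walk u v) (hp : p.IsPath) : p.length = T.dist u v := by
  obtain ⟨q, hq⟩ := hconn.exists_walk_length_eq_dist u v
  have hq' : q.IsPath := q.isPath_of_length_eq_dist hq
  have := hacyc.path_unique ⟨p, hp⟩ ⟨q, hq'⟩
  have hpq : p = q := congrArg Subtype.val this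
  rw [hpq, hq]

lemma W_sq {z : ℂ} (hz : z ∈ Metric.ball (0 : ℂ) 1) : W z * W z = 1 - z ^ 2 := by
  have hz1 : ‖z‖ < 1 := by
    simpa using mem_ball_zero_iff.mp hz
  have h0 : (1 : ℂ) - z ^ 2 ≠ 0 := by
    intro h
    have : z ^ 2 = 1 := by linear_combination -h
    have : ‖z ^ 2‖ = 1 := by rw [this]; simp
    rw [norm_pow] at this
    nlinarith [norm_nonneg z]
  have : W z * W z = (1 - z ^ 2) ^ ((1 : ℂ) / 2 + 1 / 2) := by
    rw [W, ← Complex.cpow_add _ _ h0]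
  rw [this]
  norm_num

/-- For every `z ∈ 𝔻`, the map `π_z : g ↦ c_z(x, g·x)π(g)` from `G` to
the invertible bounded operators on `ℓ²(X)` is a group homomorphism:
`π_z(e) = I` and `π_z(gh) = π_z(g)π_z(h)`. -/
theorem pi_z_is_homomorphism {X : Type} [DecidableEq X] (T : SimpleGraph X)
    (hconn : T.Connected) (hacyc : T.IsAcyclic)
    (c : ℂ → X → X → (ell2 X →L[ℂ] ell2 X))
    (hedge : ∀ z ∈ Metric.ball (0 : ℂ) 1, ∀ u v : X, T.Adj u v →
      IsEdgeOp z u v (c z u v))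
    (hgeo : ∀ z ∈ Metric.ball (0 : ℂ) 1, ∀ u v : X, ∀ p : T.Walk u v,
      p.length = T.dist u v → c z u v = walkProd (c z) p)
    {G : Type} [Group G] [MulAction G X]
    (hact : ∀ (g : G) (u v : X), T.Adj u v ↔ T.Adj (g • u) (g • v))
    (U : G → (ell2 X →L[ℂ] ell2 X))
    (hU : ∀ (g : G) (v : X), U g (delta v) = delta (g • v))
    (x₀ : X) :
    ∀ z ∈ Metric.ball (0 : ℂ) 1,
      c z x₀ ((1 : G) • x₀) * U 1 = 1 ∧
      ∀ g h : G,
        c z x₀ ((g * h) • x₀) * U (g * h) =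
          (c z x₀ (g • x₀) * U g) * (c z x₀ (h • x₀) * U h) := by
  intro z hz
  have hW : W z * W z = 1 - z ^ 2 := W_sq hz
  -- c z u u = 1
  have hnil : ∀ u : X, c z u u = 1 := by
    intro u
    have := hgeo z hz u u (SimpleGraph.Walk.nil) (by simp [SimpleGraph.dist_self])
    simpa [walkProd] using this
  -- edge inverse
  have hinv : ∀ u v : X, T.Adj u v → c z u v * c z v u = 1 := by
    intro u v huv
    obtain ⟨h1, h2, h3⟩ := hedge z hz u v huv
    obtain ⟨k1, k2, k3⟩ := hedge z hz v u huv.symm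
    apply delta_ext
    intro w
    by_cases hwu : w = u
    · subst hwu
      simp only [ContinuousLinearMap.mul_apply, ContinuousLinearMap.one_apply, k2,
        map_add, map_smul, h1, h2]
      match_scalars <;> first | ring1 | linear_combination hW
    · by_cases hwv : w = v
      · subst hwv
        simp only [ContinuousLinearMap.mul_apply, ContinuousLinearMap.one_apply, k1,
          map_sub, map_smul, h1, h2]
        match_scalars <;> first | ring1 | linear_combination hW
      · simp only [ContinuousLinearMap.mul_apply, ContinuousLinearMap.one_apply,
          k3 w hwv hwu, h3 w hwu hwv]
  -- walkProd of any walk equals c z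
  have hwalk : ∀ (u v : X) (p : T.Walk u v), walkProd (c z) p = c z u v := by
    intro u v p
    induction p with
    | nil => rw [hnil]; rfl
    | @cons u a v h p ih =>
      have step : c z u a * c z a v = c z u v := by
        obtain ⟨q0, hq0⟩ := hconn.exists_walk_length_eq_dist a v
        have hq0p : q0.IsPath := q0.isPath_of_length_eq_dist hq0
        have hcav : c z a v = walkProd (c z) q0 := hgeo z hz a v q0 hq0
        by_cases hu : u ∈ q0.support
        · -- q0 starts with the edge a-u
          have htake : q0.takeUntil u hu = SimpleGraph.Walk.cons h.symm SimpleGraph.Walk.nil := by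
            have h1 : (q0.takeUntil u hu).IsPath := hq0p.takeUntil hu
            have := hacyc.path_unique ⟨q0.takeUntil u hu, h1⟩ (SimpleGraph.Path.singleton h.symm)
            simpa [SimpleGraph.Path.singleton] using congrArg Subtype.val this
          have hdrop : (q0.dropUntil u hu).IsPath := hq0p.dropUntil hu
          have hsplit := q0.take_spec hu
          have hq0' : walkProd (c z) q0 = c z a u * walkProd (c z) (q0.dropUntil u hu) := by
            conv_lhs => rw [← hsplit]
            rw [walkProd_append, htake]
            simp [walkProd]
          have hdropgeo : walkProd (c z) (q0.dropUntil u hu) = c z u v :=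
            (hgeo z hz u v _ (path_length_eq_dist hconn hacyc _ hdrop)).symm
          rw [hcav, hq0', hdropgeo, ← mul_assoc, hinv u a h, one_mul]
        · -- cons h q0 is a path from u to v
          have hp' : (SimpleGraph.Walk.cons h q0).IsPath := hq0p.cons hu
          have := hgeo z hz u v _ (path_length_eq_dist hconn hacyc _ hp')
          rw [this]
          simp [walkProd, hcav]
      rw [walkProd, ih, step]
  -- composition law
  have hcomp : ∀ u v w : X, c z u v * c z v w = c z u w := by
    intro u v w
    obtain ⟨p, _⟩ := hconn.exists_walk_length_eq_dist u v
    obtain ⟨q, _⟩ := hconn.exists_walk_length_eq_dist v w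
    rw [← hwalk u v p, ← hwalk v w q, ← walkProd_append, hwalk u w]
  -- U is multiplicative
  have hUmul : ∀ g h : G, U g * U h = U (g * h) := by
    intro g h
    apply delta_ext
    intro v
    simp [ContinuousLinearMap.mul_apply, hU, mul_smul]
  have hUone : U 1 = 1 := by
    apply delta_ext
    intro v
    simp [hU]
  -- equivariance on edges
  have hequivEdge : ∀ (g : G) (u v : X), T.Adj u v →
      U g * c z u v = c z (g • u) (g • v) * U g := by
    intro g u v huv
    obtain ⟨h1, h2, h3⟩ := hedge z hz u v huv
    obtain ⟨k1, k2, k3⟩ := hedge z hz (g • u) (g • v) ((hact g u v).mp huv)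
    apply delta_ext
    intro w
    by_cases hwu : w = u
    · subst hwu
      simp [ContinuousLinearMap.mul_apply, h1, hU, k1, map_sub, map_smul]
    · by_cases hwv : w = v
      · subst hwv
        simp [ContinuousLinearMap.mul_apply, h2, hU, k2, map_add, map_smul]
      · have hgu : g • w ≠ g • u := fun hh => hwu (smul_left_cancel g hh)
        have hgv : g • w ≠ g • v := fun hh => hwv (smul_left_cancel g hh)
        simp [ContinuousLinearMap.mul_apply, h3 w hwu hwv, hU, k3 _ hgu hgv]
  -- equivariance in general
  have hequiv : ∀ (g : G) (u v : X), U g * c z u v = c z (g • u) (g • v) * U g := by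
    intro g u v
    obtain ⟨p, -⟩ := hconn.exists_walk_length_eq_dist u v
    induction p with
    | nil => rw [hnil, hnil, mul_one, one_mul]
    | @cons u a v h p ih =>
      rw [← hcomp u a v, ← mul_assoc, hequivEdge g u a h, mul_assoc, ih, ← mul_assoc,
        hcomp]
  constructor
  · rw [one_smul, hnil, hUone, one_mul]
  · intro g h
    symm
    calc (c z x₀ (g • x₀) * U g) * (c z x₀ (h • x₀) * U h)
        = c z x₀ (g • x₀) * (U g * c z x₀ (h • x₀)) * U h := by
          simp only [mul_assoc]
      _ = c z x₀ (g • x₀) * (c z (g • x₀) (g • h • x₀) * U g) * U h := by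
          rw [hequiv g x₀ (h • x₀)]
      _ = (c z x₀ (g • x₀) * c z (g • x₀) (g • h • x₀)) * (U g * U h) := by
          simp only [mul_assoc]
      _ = c z x₀ ((g * h) • x₀) * U (g * h) := by
          rw [hcomp, hUmul, mul_smul]
end
end

section
/- For every real number t with 0 < t < 1, the representation π_t is unitary: π_t(g)* π_t(g) = I = π_t(g) π_t(g)* for every g ∈ G. -/
noncomputable section

open scoped ComplexConjugate

section helpers
variable {X : Type} [DecidableEq X]

lemma single_eq_smul_delta (v : X) (a : ℂ) : lp.single 2 v a = a • delta v := by
  ext j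
  simp [delta, lp.single_apply, lp.coeFn_smul]
  by_cases h : j = v <;> simp [Pi.single_apply, h]

lemma ext_delta {B₁ B₂ : ell2 X →L[ℂ] ell2 X}
    (h : ∀ v, B₁ (delta v) = B₂ (delta v)) : B₁ = B₂ := by
  refine ContinuousLinearMap.ext fun f => ?_
  have hs := lp.hasSum_single (E := fun _ : X => ℂ) (p := 2) (by norm_num) f
  have h1 := hs.mapL B₁
  have h2 := hs.mapL B₂
  refine h1.unique ?_
  convert h2 using 2 with i
  rw [single_eq_smul_delta, map_smul, map_smul, h i]

lemma inner_delta_delta (u v : X) :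
    (inner ℂ (delta u) (delta v) : ℂ) = if u = v then 1 else 0 := by
  rw [delta, lp.inner_single_left]
  simp [delta, lp.single_apply]
  simp [Pi.single_apply, eq_comm]

lemma ell2_ext_inner {f g : ell2 X}
    (h : ∀ u : X, (inner ℂ (delta u) f : ℂ) = inner ℂ (delta u) g) : f = g := by
  apply lp.ext; funext u
  have := h u
  rwa [delta, lp.inner_single_left, lp.inner_single_left, RCLike.inner_apply,
    RCLike.inner_apply, map_one, mul_one, mul_one] at this

lemma adjoint_eq_of {A B : ell2 X →L[ℂ] ell2 X}
    (h : ∀ u v : X, (inner ℂ (A (delta u)) (delta v) : ℂ) = inner ℂ (delta u) (B (delta v))) :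
    ContinuousLinearMap.adjoint A = B := by
  apply ext_delta; intro v
  apply ell2_ext_inner; intro u
  rw [ContinuousLinearMap.adjoint_inner_right]; exact h u v

omit [DecidableEq X] in
lemma mem_unitary_of {A B : ell2 X →L[ℂ] ell2 X}
    (h1 : A * B = 1) (h2 : B * A = 1) (h3 : ContinuousLinearMap.adjoint A = B) :
    A ∈ unitary (ell2 X →L[ℂ] ell2 X) :=
  ⟨by rw [ContinuousLinearMap.star_eq_adjoint, h3, h2],
   by rw [ContinuousLinearMap.star_eq_adjoint, h3, h1]⟩

end helpers

lemma W_eq {t : ℝ} (h : 0 ≤ 1 - t ^ 2) : W (t : ℂ) = (Real.sqrt (1 - t ^ 2) : ℂ) := by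
  have h1 : (1 : ℂ) - (t : ℂ) ^ 2 = ((1 - t ^ 2 : ℝ) : ℂ) := by push_cast; ring
  rw [W, h1, show ((1 : ℂ) / 2) = ((1 / 2 : ℝ) : ℂ) by norm_num,
    ← Complex.ofReal_cpow h]
  rw [Real.sqrt_eq_rpow]

set_option maxHeartbeats 1000000 in
lemma edge_unitary {X : Type} [DecidableEq X] {t : ℝ} (ht0 : 0 < t) (ht1 : t < 1)
    {x y : X} (hxy : x ≠ y) {A A' : ell2 X →L[ℂ] ell2 X}
    (hA : IsEdgeOp (t : ℂ) x y A) (hA' : IsEdgeOp (t : ℂ) y x A') :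
    A ∈ unitary (ell2 X →L[ℂ] ell2 X) := by
  have hsq : 0 ≤ 1 - t ^ 2 := by nlinarith
  set w : ℝ := Real.sqrt (1 - t ^ 2) with hw
  have hw2 : (w : ℂ) ^ 2 + (t : ℂ) ^ 2 = 1 := by
    have h2 : w ^ 2 = 1 - t ^ 2 := Real.sq_sqrt hsq
    rw [show ((w : ℂ) ^ 2) = ((w ^ 2 : ℝ) : ℂ) by push_cast; ring, h2]
    push_cast; ring
  have hWt : W (t : ℂ) = (w : ℂ) := W_eq hsq
  obtain ⟨hAx, hAy, hAo⟩ := hA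
  obtain ⟨hA'y, hA'x, hA'o⟩ := hA'
  rw [hWt] at hAx hAy hA'x hA'y
  have hyx := hxy.symm
  have hcomp1 : A * A' = 1 := by
    apply ext_delta; intro v
    by_cases hvx : v = x
    · rw [hvx]
      simp only [ContinuousLinearMap.mul_apply, ContinuousLinearMap.one_apply,
        hA'x, map_add, map_smul, hAx, hAy]
      match_scalars <;> first | ring1 | linear_combination hw2
    · by_cases hvy : v = y
      · rw [hvy]
        simp only [ContinuousLinearMap.mul_apply, ContinuousLinearMap.one_apply,
          hA'y, map_sub, map_smul, hAx, hAy]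
        match_scalars <;> first | ring1 | linear_combination hw2
      · simp only [ContinuousLinearMap.mul_apply, ContinuousLinearMap.one_apply,
          hA'o v hvy hvx, hAo v hvx hvy]
  have hcomp2 : A' * A = 1 := by
    apply ext_delta; intro v
    by_cases hvx : v = x
    · rw [hvx]
      simp only [ContinuousLinearMap.mul_apply, ContinuousLinearMap.one_apply,
        hAx, map_sub, map_smul, hA'x, hA'y]
      match_scalars <;> first | ring1 | linear_combination hw2
    · by_cases hvy : v = y
      · rw [hvy]
        simp only [ContinuousLinearMap.mul_apply, ContinuousLinearMap.one_apply,
          hAy, map_add, map_smul, hA'x, hA'y]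
        match_scalars <;> first | ring1 | linear_combination hw2
      · simp only [ContinuousLinearMap.mul_apply, ContinuousLinearMap.one_apply,
          hAo v hvx hvy, hA'o v hvy hvx]
  have hadj : ContinuousLinearMap.adjoint A = A' := by
    apply adjoint_eq_of
    intro u v
    by_cases hux : u = x
    · rw [hux]
      by_cases hvx : v = x
      · rw [hvx, hAx, hA'x]
        simp only [inner_sub_left, inner_add_right, inner_smul_left, inner_smul_right,
          inner_delta_delta, Complex.conj_ofReal]
        all_goals simp [hxy, hyx]
      · by_cases hvy : v = y
        · rw [hvy, hAx, hA'y]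
          simp only [inner_sub_left, inner_sub_right, inner_smul_left, inner_smul_right,
            inner_delta_delta, Complex.conj_ofReal]
          all_goals simp [hxy, hyx]
        · rw [hAx, hA'o v hvy hvx]
          simp only [inner_sub_left, inner_smul_left, inner_delta_delta,
            Complex.conj_ofReal]
          all_goals simp [Ne.symm hvx, Ne.symm hvy]
    · by_cases huy : u = y
      · rw [huy]
        by_cases hvx : v = x
        · rw [hvx, hAy, hA'x]
          simp only [inner_add_left, inner_add_right, inner_smul_left, inner_smul_right,
            inner_delta_delta, Complex.conj_ofReal]
          all_goals simp [hxy, hyx]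
        · by_cases hvy : v = y
          · rw [hvy, hAy, hA'y]
            simp only [inner_add_left, inner_sub_right, inner_smul_left, inner_smul_right,
              inner_delta_delta, Complex.conj_ofReal]
            all_goals simp [hxy, hyx]
          · rw [hAy, hA'o v hvy hvx]
            simp only [inner_add_left, inner_smul_left, inner_delta_delta,
              Complex.conj_ofReal]
            all_goals simp [Ne.symm hvx, Ne.symm hvy]
      · rw [hAo u hux huy]
        by_cases hvx : v = x
        · rw [hvx, hA'x]
          simp only [inner_add_right, inner_smul_right, inner_delta_delta]
          all_goals simp [hux, huy]
        · by_cases hvy : v = y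
          · rw [hvy, hA'y]
            simp only [inner_sub_right, inner_smul_right, inner_delta_delta]
            all_goals simp [hux, huy]
          · rw [hA'o v hvy hvx]
  exact mem_unitary_of hcomp1 hcomp2 hadj

/-- For every real `t` with `0 < t < 1`, the representation `π_t` is
unitary: `π_t(g)* π_t(g) = I = π_t(g) π_t(g)*` for every `g ∈ G`. -/
theorem pi_t_unitary {X : Type} [DecidableEq X] (T : SimpleGraph X)
    (hconn : T.Connected) (hacyc : T.IsAcyclic)
    (c : ℂ → X → X → (ell2 X →L[ℂ] ell2 X))
    (hedge : ∀ z ∈ Metric.ball (0 : ℂ) 1, ∀ u v : X, T.Adj u v →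
      IsEdgeOp z u v (c z u v))
    (hgeo : ∀ z ∈ Metric.ball (0 : ℂ) 1, ∀ u v : X, ∀ p : T.Walk u v,
      p.length = T.dist u v → c z u v = walkProd (c z) p)
    {G : Type} [Group G] [MulAction G X]
    (hact : ∀ (g : G) (u v : X), T.Adj u v ↔ T.Adj (g • u) (g • v))
    (U : G → (ell2 X →L[ℂ] ell2 X))
    (hU : ∀ (g : G) (v : X), U g (delta v) = delta (g • v))
    (x₀ : X) :
    ∀ t : ℝ, 0 < t → t < 1 → ∀ g : G,
      ContinuousLinearMap.adjoint (c (t : ℂ) x₀ (g • x₀) * U g) *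
          (c (t : ℂ) x₀ (g • x₀) * U g) = 1 ∧
      (c (t : ℂ) x₀ (g • x₀) * U g) *
          ContinuousLinearMap.adjoint (c (t : ℂ) x₀ (g • x₀) * U g) = 1 := by
  intro t ht0 ht1 g
  have hball : (t : ℂ) ∈ Metric.ball (0 : ℂ) 1 := by
    rw [Metric.mem_ball, dist_zero_right, Complex.norm_real, Real.norm_eq_abs,
      abs_of_pos ht0]
    exact ht1
  have hUmem : ∀ g : G, U g ∈ unitary (ell2 X →L[ℂ] ell2 X) := by
    intro g
    have hcomp1 : U g * U g⁻¹ = 1 := ext_delta fun v => by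
      simp only [ContinuousLinearMap.mul_apply, ContinuousLinearMap.one_apply, hU,
        smul_inv_smul]
    have hcomp2 : U g⁻¹ * U g = 1 := ext_delta fun v => by
      simp only [ContinuousLinearMap.mul_apply, ContinuousLinearMap.one_apply, hU,
        inv_smul_smul]
    have hadj : ContinuousLinearMap.adjoint (U g) = U g⁻¹ := by
      apply adjoint_eq_of; intro u v
      rw [hU, hU, inner_delta_delta, inner_delta_delta]
      by_cases h : g • u = v
      · rw [if_pos h, if_pos (by rw [← h, inv_smul_smul])]
      · rw [if_neg h, if_neg (fun hh => h (by rw [hh, smul_inv_smul]))]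
    exact mem_unitary_of hcomp1 hcomp2 hadj
  have hwalk : ∀ (u v : X) (p : T.Walk u v),
      walkProd (c (t : ℂ)) p ∈ unitary (ell2 X →L[ℂ] ell2 X) := by
    intro u v p
    induction p with
    | nil => exact one_mem _
    | cons h p ih =>
      exact mul_mem (edge_unitary ht0 ht1 h.ne
        (hedge _ hball _ _ h) (hedge _ hball _ _ h.symm)) ih
  obtain ⟨p, hp⟩ := hconn.exists_walk_length_eq_dist x₀ (g • x₀)
  have hc : c (t : ℂ) x₀ (g • x₀) = walkProd (c (t : ℂ)) p := hgeo _ hball _ _ p hp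
  have hmem : (c (t : ℂ) x₀ (g • x₀) * U g) ∈ unitary (ell2 X →L[ℂ] ell2 X) := by
    rw [hc]; exact mul_mem (hwalk _ _ p) (hUmem g)
  obtain ⟨h1, h2⟩ := Unitary.mem_iff.mp hmem
  rw [ContinuousLinearMap.star_eq_adjoint] at h1 h2
  exact ⟨h1, h2⟩
end
end
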